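/- In the matrix form of OPS, assume there exist a stochastic vector ψ ∈ ℝ^n (ψ_i ≥ 0, Σ_i ψ_i = 1) and constants C ≥ 0, q ∈ [0,1) such that |(W^k)_{ji} − ψ_i| ≤ C q^k for all i, j ∈ [n] and all k ≥ 1, and a constant δ_min > 0 such that Σ_j (W^k)_{ji} ≥ n δ_min for all i ∈ [n] and k ≥ 1. Then for every T ≥ 0, Σ_{t=0}^T Σ_{i=1}^n ‖x_{t+1}^{(i)} − z̄_{t+1}‖² ≤ (4 γ² C² q² / (δ_min² (1−q)²)) Σ_{t=0}^T ‖G_t‖_F². -/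

import Mathlib

lemma ops_weighted_cs {ι : Type*} (s : Finset ι) (v f : ι → ℝ) (hv : ∀ i ∈ s, 0 ≤ v i) :
    (∑ i ∈ s, v i * f i) ^ 2 ≤ (∑ i ∈ s, v i) * ∑ i ∈ s, v i * f i ^ 2 := by
  have h := Finset.sum_mul_sq_le_sq_mul_sq s (fun i => Real.sqrt (v i))
      (fun i => Real.sqrt (v i) * f i)
  have e1 : ∀ i ∈ s, Real.sqrt (v i) * (Real.sqrt (v i) * f i) = v i * f i := by
    intro i hi
    rw [← mul_assoc, Real.mul_self_sqrt (hv i hi)]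
  have e2 : ∀ i ∈ s, Real.sqrt (v i) ^ 2 = v i := fun i hi => Real.sq_sqrt (hv i hi)
  have e3 : ∀ i ∈ s, (Real.sqrt (v i) * f i) ^ 2 = v i * f i ^ 2 := by
    intro i hi
    rw [mul_pow, Real.sq_sqrt (hv i hi)]
  rw [Finset.sum_congr rfl e1, Finset.sum_congr rfl e2, Finset.sum_congr rfl e3] at h
  exact h

lemma ops_pow_row {n : ℕ} (W : Matrix (Fin n) (Fin n) ℝ) (hW_row : ∀ i, ∑ j, W i j = 1) :
    ∀ k : ℕ, ∀ i, ∑ j, (W ^ k) i j = 1 := by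
  intro k
  induction k with
  | zero => intro i; simp [Matrix.one_apply]
  | succ k ih =>
    intro i
    rw [pow_succ]
    simp only [Matrix.mul_apply]
    rw [Finset.sum_comm]
    calc ∑ l, ∑ j, (W ^ k) i l * W l j
        = ∑ l, (W ^ k) i l * ∑ j, W l j := by
          exact Finset.sum_congr rfl fun l _ => (Finset.mul_sum _ _ _).symm
      _ = 1 := by simp_rw [hW_row, mul_one]; exact ih i

lemma ops_w_formula {n : ℕ} {W : Matrix (Fin n) (Fin n) ℝ} (w : ℕ → Fin n → ℝ)
    (hw0 : ∀ i, w 0 i = 1)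
    (hwrec : ∀ t i, w (t + 1) i = ∑ j, W j i * w t j) :
    ∀ t i, w t i = ∑ j, (W ^ t) j i := by
  intro t
  induction t with
  | zero => intro i; simp [hw0, Matrix.one_apply]
  | succ t ih =>
    intro i
    rw [hwrec]
    calc ∑ j, W j i * w t j
        = ∑ j, ∑ l, (W ^ t) l j * W j i := by
          refine Finset.sum_congr rfl fun j _ => ?_
          rw [ih j, Finset.mul_sum]
          exact Finset.sum_congr rfl fun l _ => mul_comm _ _
      _ = ∑ l, (W ^ (t + 1)) l i := by
          rw [Finset.sum_comm]
          refine Finset.sum_congr rfl fun l _ => ?_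
          rw [pow_succ, Matrix.mul_apply]

lemma ops_Z_formula {n d : ℕ} {W : Matrix (Fin n) (Fin n) ℝ} (γ : ℝ)
    (G Z : ℕ → Matrix (Fin d) (Fin n) ℝ)
    (hZ0 : Z 0 = 0) (hZrec : ∀ t, Z (t + 1) = (Z t - γ • G t) * W) :
    ∀ t, Z (t + 1) = ∑ s ∈ Finset.range (t + 1), (-γ) • (G s * W ^ (t + 1 - s)) := by
  intro t
  induction t with
  | zero =>
    rw [hZrec, hZ0]
    simp [Matrix.sub_mul, Matrix.smul_mul, neg_smul]
  | succ t ih =>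
    rw [hZrec, ih, Matrix.sub_mul, Matrix.sum_mul, sub_eq_add_neg]
    have hsum : (∑ s ∈ Finset.range (t + 1), (-γ) • (G s * W ^ (t + 1 - s)) * W)
        = ∑ s ∈ Finset.range (t + 1), (-γ) • (G s * W ^ (t + 1 + 1 - s)) := by
      refine Finset.sum_congr rfl fun s hs => ?_
      rw [Finset.mem_range] at hs
      have h2 : t + 1 + 1 - s = (t + 1 - s) + 1 := by omega
      rw [Matrix.smul_mul, Matrix.mul_assoc, ← pow_succ, h2]
    have hlast : -(γ • G (t + 1) * W) = (-γ) • (G (t + 1) * W ^ (t + 1 + 1 - (t + 1))) := by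
      have h1 : t + 1 + 1 - (t + 1) = 1 := by omega
      rw [h1, pow_one, Matrix.smul_mul, ← neg_smul]
    rw [hsum, hlast, ← Finset.sum_range_succ]

/-- **Lemma 4.** Consensus bound for the matrix form of OPS: under the geometric concentration
and lower-bound assumptions on the powers of the row-stochastic matrix `W`,
`∑_{t=0}^T ∑_i ‖x_{t+1}^{(i)} - z̄_{t+1}‖² ≤ (4 γ² C² q² / (δ_min² (1-q)²)) ∑_{t=0}^T ‖G_t‖_F²`. -/
theorem ops_consensus_bound
    (n d : ℕ) (hn : 0 < n) (hd : 0 < d) (γ : ℝ) (hγ : 0 < γ)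
    (W : Matrix (Fin n) (Fin n) ℝ)
    (hW_nonneg : ∀ i j, 0 ≤ W i j)
    (hW_row : ∀ i, ∑ j, W i j = 1)
    (ψ : Fin n → ℝ) (hψ0 : ∀ i, 0 ≤ ψ i) (hψ1 : ∑ i, ψ i = 1)
    (C q δmin : ℝ) (hC : 0 ≤ C) (hq0 : 0 ≤ q) (hq1 : q < 1) (hδ : 0 < δmin)
    (hWgeom : ∀ k : ℕ, 1 ≤ k → ∀ i j : Fin n, |(W ^ k) j i - ψ i| ≤ C * q ^ k)
    (hWlow : ∀ k : ℕ, 1 ≤ k → ∀ i : Fin n, (n : ℝ) * δmin ≤ ∑ j, (W ^ k) j i)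
    (G : ℕ → Matrix (Fin d) (Fin n) ℝ)
    (Z : ℕ → Matrix (Fin d) (Fin n) ℝ)
    (hZ0 : Z 0 = 0)
    (hZrec : ∀ t, Z (t + 1) = (Z t - γ • G t) * W)
    (w : ℕ → Fin n → ℝ)
    (hw0 : ∀ i, w 0 i = 1)
    (hwrec : ∀ t i, w (t + 1) i = ∑ j, W j i * w t j)
    (x : ℕ → Fin n → Fin d → ℝ)
    (hx : ∀ t i r, x t i r = (w t i)⁻¹ * Z t r i)
    (zbar : ℕ → Fin d → ℝ)
    (hzbar : ∀ t r, zbar t r = (n : ℝ)⁻¹ * ∑ i, Z t r i)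
    (T : ℕ) :
    ∑ t ∈ Finset.range (T + 1), ∑ i, ∑ r, (x (t + 1) i r - zbar (t + 1) r) ^ 2
      ≤ 4 * γ ^ 2 * C ^ 2 * q ^ 2 / (δmin ^ 2 * (1 - q) ^ 2)
        * ∑ t ∈ Finset.range (T + 1), ∑ r, ∑ i, (G t r i) ^ 2 := by
  have hn' : (0:ℝ) < n := by exact_mod_cast hn
  have h1q : (0:ℝ) < 1 - q := by linarith
  set α : ℝ := 2 * γ * C / ((n:ℝ) * δmin) with hα
  have hα0 : 0 ≤ α := by positivity
  have hrowp := ops_pow_row W hW_row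
  have hwf := ops_w_formula (W := W) w hw0 hwrec
  have hZf := ops_Z_formula (W := W) γ G Z hZ0 hZrec
  -- positivity of weights
  have hwge : ∀ t i, (n:ℝ) * δmin ≤ w (t + 1) i := by
    intro t i
    rw [hwf]
    exact hWlow (t + 1) (by omega) i
  have hwpos : ∀ t i, 0 < w (t + 1) i := fun t i =>
    lt_of_lt_of_le (by positivity) (hwge t i)
  -- entrywise formula for Z
  have hZe : ∀ t r i, Z (t + 1) r i
      = ∑ s ∈ Finset.range (t + 1), (-γ) * ∑ j, G s r j * (W ^ (t + 1 - s)) j i := by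
    intro t r i
    rw [hZf t]
    rw [Matrix.sum_apply]
    refine Finset.sum_congr rfl fun s _ => ?_
    rw [Matrix.smul_apply, Matrix.mul_apply, smul_eq_mul]
  -- difference formula
  have hdiff : ∀ t i r, x (t + 1) i r - zbar (t + 1) r
      = ∑ s ∈ Finset.range (t + 1), (-γ) *
          ∑ j, G s r j * ((W ^ (t + 1 - s)) j i * (w (t + 1) i)⁻¹ - (n:ℝ)⁻¹) := by
    intro t i r
    rw [hx, hzbar]
    have e1 : (w (t + 1) i)⁻¹ * Z (t + 1) r i
        = ∑ s ∈ Finset.range (t + 1), (-γ) *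
            ∑ j, G s r j * ((W ^ (t + 1 - s)) j i * (w (t + 1) i)⁻¹) := by
      rw [hZe, Finset.mul_sum]
      refine Finset.sum_congr rfl fun s _ => ?_
      rw [mul_left_comm]
      congr 1
      rw [Finset.mul_sum]
      exact Finset.sum_congr rfl fun j _ => by ring
    have e2 : (n:ℝ)⁻¹ * ∑ i', Z (t + 1) r i'
        = ∑ s ∈ Finset.range (t + 1), (-γ) * ∑ j, G s r j * (n:ℝ)⁻¹ := by
      simp only [hZe]
      rw [Finset.sum_comm]
      rw [Finset.mul_sum]
      refine Finset.sum_congr rfl fun s _ => ?_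
      have e3 : (∑ i' : Fin n, (-γ) * ∑ j, G s r j * (W ^ (t + 1 - s)) j i')
          = (-γ) * ∑ j, G s r j * ∑ i' : Fin n, (W ^ (t + 1 - s)) j i' := by
        rw [← Finset.mul_sum]
        congr 1
        rw [Finset.sum_comm]
        exact Finset.sum_congr rfl fun j _ => (Finset.mul_sum _ _ _).symm
      rw [e3]
      simp_rw [hrowp (t + 1 - s), mul_one]
      rw [← Finset.sum_mul]
      ring
    rw [e1, e2, ← Finset.sum_sub_distrib]
    refine Finset.sum_congr rfl fun s _ => ?_
    rw [← mul_sub, ← Finset.sum_sub_distrib]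
    congr 1
    exact Finset.sum_congr rfl fun j _ => by ring
  -- coefficient bound
  have hcbound : ∀ t s i j, s < t + 1 →
      |(W ^ (t + 1 - s)) j i * (w (t + 1) i)⁻¹ - (n:ℝ)⁻¹| ≤ 2 * C * q ^ (t + 1 - s) / ((n:ℝ) * δmin) := by
    intro t s i j hs
    set k := t + 1 - s with hk
    have hk1 : 1 ≤ k := by omega
    have hkle : k ≤ t + 1 := by omega
    set wi := w (t + 1) i with hwi
    have hwipos : 0 < wi := hwpos t i
    have key : (W ^ k) j i * wi⁻¹ - (n:ℝ)⁻¹ = ((W ^ k) j i - wi * (n:ℝ)⁻¹) * wi⁻¹ := by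
      field_simp
    have hnum : |(W ^ k) j i - wi * (n:ℝ)⁻¹| ≤ 2 * C * q ^ k := by
      have h1 : |(W ^ k) j i - ψ i| ≤ C * q ^ k := hWgeom k hk1 i j
      have h2 : |ψ i - wi * (n:ℝ)⁻¹| ≤ C * q ^ (t + 1) := by
        have hwieq : wi = ∑ l, (W ^ (t + 1)) l i := hwf (t + 1) i
        have e : ψ i - wi * (n:ℝ)⁻¹ = (∑ l : Fin n, (ψ i - (W ^ (t + 1)) l i)) * (n:ℝ)⁻¹ := by
          rw [hwieq, Finset.sum_sub_distrib, Finset.sum_const, Finset.card_univ,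
            Fintype.card_fin]
          field_simp
          ring
        rw [e, abs_mul, abs_inv, Nat.abs_cast]
        have h3 : |∑ l : Fin n, (ψ i - (W ^ (t + 1)) l i)| ≤ (n:ℝ) * (C * q ^ (t + 1)) := by
          refine (Finset.abs_sum_le_sum_abs _ _).trans ?_
          calc ∑ l : Fin n, |ψ i - (W ^ (t + 1)) l i|
              ≤ ∑ _l : Fin n, C * q ^ (t + 1) := by
                refine Finset.sum_le_sum fun l _ => ?_
                rw [abs_sub_comm]
                exact hWgeom (t + 1) (by omega) i l
            _ = (n:ℝ) * (C * q ^ (t + 1)) := by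
                rw [Finset.sum_const, Finset.card_univ, Fintype.card_fin, nsmul_eq_mul]
          
        calc |∑ l : Fin n, (ψ i - (W ^ (t + 1)) l i)| * ((n:ℝ))⁻¹
            ≤ (n:ℝ) * (C * q ^ (t + 1)) * ((n:ℝ))⁻¹ := by
              exact mul_le_mul_of_nonneg_right h3 (by positivity)
          _ = C * q ^ (t + 1) := by field_simp
      have h4 : C * q ^ (t + 1) ≤ C * q ^ k :=
        mul_le_mul_of_nonneg_left (pow_le_pow_of_le_one hq0 hq1.le hkle) hC
      calc |(W ^ k) j i - wi * (n:ℝ)⁻¹|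
          = |((W ^ k) j i - ψ i) + (ψ i - wi * (n:ℝ)⁻¹)| := by ring_nf
        _ ≤ |(W ^ k) j i - ψ i| + |ψ i - wi * (n:ℝ)⁻¹| := abs_add_le _ _
        _ ≤ C * q ^ k + C * q ^ (t + 1) := add_le_add h1 h2
        _ ≤ C * q ^ k + C * q ^ k := by linarith
        _ = 2 * C * q ^ k := by ring
    rw [key, abs_mul, abs_inv, abs_of_pos hwipos]
    have hwinv : wi⁻¹ ≤ ((n:ℝ) * δmin)⁻¹ :=
      inv_anti₀ (by positivity) (hwge t i)
    calc |(W ^ k) j i - wi * (n:ℝ)⁻¹| * wi⁻¹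
        ≤ (2 * C * q ^ k) * ((n:ℝ) * δmin)⁻¹ := by
          exact mul_le_mul hnum hwinv (by positivity) (by positivity)
      _ = 2 * C * q ^ k / ((n:ℝ) * δmin) := by rw [div_eq_mul_inv]
  -- absolute value bound
  have habs : ∀ t i r, |x (t + 1) i r - zbar (t + 1) r|
      ≤ ∑ s ∈ Finset.range (t + 1), q ^ (t + 1 - s) * (α * ∑ j, |G s r j|) := by
    intro t i r
    rw [hdiff]
    refine (Finset.abs_sum_le_sum_abs _ _).trans ?_
    refine Finset.sum_le_sum fun s hs => ?_
    rw [Finset.mem_range] at hs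
    rw [abs_mul, abs_neg, abs_of_pos hγ]
    refine (mul_le_mul_of_nonneg_left (Finset.abs_sum_le_sum_abs _ _) hγ.le).trans ?_
    have hterm : ∀ j : Fin n, |G s r j * ((W ^ (t + 1 - s)) j i * (w (t + 1) i)⁻¹ - (n:ℝ)⁻¹)|
        ≤ |G s r j| * (2 * C * q ^ (t + 1 - s) / ((n:ℝ) * δmin)) := by
      intro j
      rw [abs_mul]
      exact mul_le_mul_of_nonneg_left (hcbound t s i j hs) (abs_nonneg _)
    calc γ * ∑ j, |G s r j * ((W ^ (t + 1 - s)) j i * (w (t + 1) i)⁻¹ - (n:ℝ)⁻¹)|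
        ≤ γ * ∑ j, |G s r j| * (2 * C * q ^ (t + 1 - s) / ((n:ℝ) * δmin)) :=
          mul_le_mul_of_nonneg_left (Finset.sum_le_sum fun j _ => hterm j) hγ.le
      _ = q ^ (t + 1 - s) * (α * ∑ j, |G s r j|) := by
          rw [← Finset.sum_mul, hα]
          field_simp
  -- geometric sums
  have hq_sum : ∀ m : ℕ, (∑ j ∈ Finset.range m, q ^ (j + 1)) ≤ q / (1 - q) := by
    intro m
    have hgeom : (∑ j ∈ Finset.range m, q ^ j) ≤ 1 / (1 - q) := by
      have e0 : (∑ j ∈ Finset.range m, q ^ j) = (1 - q ^ m) / (1 - q) := by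
        rw [geom_sum_eq hq1.ne m, div_eq_div_iff (by intro h; apply h1q.ne'; linarith) h1q.ne']
        ring
      rw [e0, div_le_div_iff₀ h1q h1q]
      have : 0 ≤ q ^ m := by positivity
      nlinarith
    have e : (∑ j ∈ Finset.range m, q ^ (j + 1)) = (∑ j ∈ Finset.range m, q ^ j) * q := by
      rw [Finset.sum_mul]
      exact Finset.sum_congr rfl fun j _ => (pow_succ q j).symm
    rw [e, div_eq_mul_inv]
    calc (∑ j ∈ Finset.range m, q ^ j) * q ≤ 1 * (1 - q)⁻¹ * q := by
          refine mul_le_mul_of_nonneg_right ?_ hq0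
          rw [← div_eq_mul_inv]
          exact hgeom
      _ = q * (1 - q)⁻¹ := by ring
  have hreflect : ∀ t : ℕ, (∑ s ∈ Finset.range (t + 1), q ^ (t + 1 - s)) ≤ q / (1 - q) := by
    intro t
    have h := Finset.sum_range_reflect (fun j => q ^ (j + 1)) (t + 1)
    calc (∑ s ∈ Finset.range (t + 1), q ^ (t + 1 - s))
        = ∑ j ∈ Finset.range (t + 1), q ^ (j + 1) := by
          rw [← h]
          refine Finset.sum_congr rfl fun s hs => ?_
          rw [Finset.mem_range] at hs
          congr 1
          omega
      _ ≤ q / (1 - q) := hq_sum (t + 1)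
  have hIco : ∀ s, (∑ t ∈ Finset.Ico s (T + 1), q ^ (t + 1 - s)) ≤ q / (1 - q) := by
    intro s
    rw [Finset.sum_Ico_eq_sum_range]
    calc (∑ j ∈ Finset.range (T + 1 - s), q ^ (s + j + 1 - s))
        = ∑ j ∈ Finset.range (T + 1 - s), q ^ (j + 1) := by
          refine Finset.sum_congr rfl fun j _ => ?_
          congr 1
          omega
      _ ≤ q / (1 - q) := hq_sum _
  -- squared bound per (t, i, r)
  have hsq : ∀ t i r, (x (t + 1) i r - zbar (t + 1) r) ^ 2
      ≤ (q / (1 - q)) * ∑ s ∈ Finset.range (t + 1),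
          q ^ (t + 1 - s) * (α ^ 2 * ((n:ℝ) * ∑ j, (G s r j) ^ 2)) := by
    intro t i r
    have h1 : (x (t + 1) i r - zbar (t + 1) r) ^ 2
        ≤ (∑ s ∈ Finset.range (t + 1), q ^ (t + 1 - s) * (α * ∑ j, |G s r j|)) ^ 2 := by
      rw [← sq_abs]
      exact pow_le_pow_left₀ (abs_nonneg _) (habs t i r) 2
    have h2 := ops_weighted_cs (Finset.range (t + 1)) (fun s => q ^ (t + 1 - s))
      (fun s => α * ∑ j, |G s r j|) (fun s _ => by positivity)
    have h3 : (∑ s ∈ Finset.range (t + 1), q ^ (t + 1 - s))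
          * (∑ s ∈ Finset.range (t + 1), q ^ (t + 1 - s) * (α * ∑ j, |G s r j|) ^ 2)
        ≤ (q / (1 - q)) * ∑ s ∈ Finset.range (t + 1),
            q ^ (t + 1 - s) * (α ^ 2 * ((n:ℝ) * ∑ j, (G s r j) ^ 2)) := by
      have hB : (∑ s ∈ Finset.range (t + 1), q ^ (t + 1 - s) * (α * ∑ j, |G s r j|) ^ 2)
          ≤ ∑ s ∈ Finset.range (t + 1), q ^ (t + 1 - s) * (α ^ 2 * ((n:ℝ) * ∑ j, (G s r j) ^ 2)) := by
        refine Finset.sum_le_sum fun s _ => ?_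
        refine mul_le_mul_of_nonneg_left ?_ (by positivity)
        rw [mul_pow]
        refine mul_le_mul_of_nonneg_left ?_ (by positivity)
        have := sq_sum_le_card_mul_sum_sq (s := (Finset.univ : Finset (Fin n)))
          (f := fun j => |G s r j|)
        simpa [sq_abs, Finset.card_univ] using this
      have hBnn : (0:ℝ) ≤ ∑ s ∈ Finset.range (t + 1), q ^ (t + 1 - s) * (α * ∑ j, |G s r j|) ^ 2 := by
        refine Finset.sum_nonneg fun s _ => by positivity
      calc (∑ s ∈ Finset.range (t + 1), q ^ (t + 1 - s))
            * (∑ s ∈ Finset.range (t + 1), q ^ (t + 1 - s) * (α * ∑ j, |G s r j|) ^ 2)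
          ≤ (q / (1 - q)) * (∑ s ∈ Finset.range (t + 1), q ^ (t + 1 - s) * (α * ∑ j, |G s r j|) ^ 2) :=
            mul_le_mul_of_nonneg_right (hreflect t) hBnn
        _ ≤ (q / (1 - q)) * ∑ s ∈ Finset.range (t + 1),
              q ^ (t + 1 - s) * (α ^ 2 * ((n:ℝ) * ∑ j, (G s r j) ^ 2)) :=
            mul_le_mul_of_nonneg_left hB (by positivity)
    exact h1.trans (h2.trans h3)
  -- aggregate over i and r for fixed t
  have key : ∀ t, (∑ r : Fin d, ∑ s ∈ Finset.range (t + 1),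
        q ^ (t + 1 - s) * (α ^ 2 * ((n:ℝ) * ∑ j, (G s r j) ^ 2)))
      = α ^ 2 * (n:ℝ) * ∑ s ∈ Finset.range (t + 1),
          q ^ (t + 1 - s) * (∑ r, ∑ j, (G s r j) ^ 2) := by
    intro t
    rw [Finset.sum_comm, Finset.mul_sum]
    refine Finset.sum_congr rfl fun s _ => ?_
    rw [← Finset.mul_sum, ← Finset.mul_sum, ← Finset.mul_sum]
    ring
  have hper : ∀ t, (∑ i : Fin n, ∑ r : Fin d, (x (t + 1) i r - zbar (t + 1) r) ^ 2)
      ≤ (n:ℝ) ^ 2 * α ^ 2 * (q / (1 - q)) * ∑ s ∈ Finset.range (t + 1),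
          q ^ (t + 1 - s) * (∑ r, ∑ j, (G s r j) ^ 2) := by
    intro t
    calc ∑ i : Fin n, ∑ r : Fin d, (x (t + 1) i r - zbar (t + 1) r) ^ 2
        ≤ ∑ _i : Fin n, ∑ r : Fin d, (q / (1 - q)) * ∑ s ∈ Finset.range (t + 1),
            q ^ (t + 1 - s) * (α ^ 2 * ((n:ℝ) * ∑ j, (G s r j) ^ 2)) :=
          Finset.sum_le_sum fun i _ => Finset.sum_le_sum fun r _ => hsq t i r
      _ = ∑ _i : Fin n, (q / (1 - q)) * (α ^ 2 * (n:ℝ) * ∑ s ∈ Finset.range (t + 1),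
            q ^ (t + 1 - s) * (∑ r, ∑ j, (G s r j) ^ 2)) := by
          refine Finset.sum_congr rfl fun i _ => ?_
          rw [← Finset.mul_sum, key t]
      _ = (n:ℝ) * ((q / (1 - q)) * (α ^ 2 * (n:ℝ) * ∑ s ∈ Finset.range (t + 1),
            q ^ (t + 1 - s) * (∑ r, ∑ j, (G s r j) ^ 2))) := by
          rw [Finset.sum_const, Finset.card_univ, Fintype.card_fin, nsmul_eq_mul]
      _ = (n:ℝ) ^ 2 * α ^ 2 * (q / (1 - q)) * ∑ s ∈ Finset.range (t + 1),
            q ^ (t + 1 - s) * (∑ r, ∑ j, (G s r j) ^ 2) := by ring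
  -- swap the double sum
  have hswap : (∑ t ∈ Finset.range (T + 1), ∑ s ∈ Finset.range (t + 1),
        q ^ (t + 1 - s) * (∑ r, ∑ j, (G s r j) ^ 2))
      = ∑ s ∈ Finset.range (T + 1), ∑ t ∈ Finset.Ico s (T + 1),
          q ^ (t + 1 - s) * (∑ r, ∑ j, (G s r j) ^ 2) := by
    refine Finset.sum_comm' ?_
    intro a b
    simp only [Finset.mem_range, Finset.mem_Ico]
    omega
  have hBnn : ∀ s : ℕ, (0:ℝ) ≤ ∑ r, ∑ j, (G s r j) ^ 2 := fun s => by positivity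
  have htot : (∑ t ∈ Finset.range (T + 1), ∑ s ∈ Finset.range (t + 1),
        q ^ (t + 1 - s) * (∑ r, ∑ j, (G s r j) ^ 2))
      ≤ (q / (1 - q)) * ∑ s ∈ Finset.range (T + 1), ∑ r, ∑ j, (G s r j) ^ 2 := by
    rw [hswap, Finset.mul_sum]
    refine Finset.sum_le_sum fun s _ => ?_
    rw [← Finset.sum_mul]
    exact mul_le_mul_of_nonneg_right (hIco s) (hBnn s)
  have hconst : (n:ℝ) ^ 2 * α ^ 2 * (q / (1 - q)) * (q / (1 - q))
      = 4 * γ ^ 2 * C ^ 2 * q ^ 2 / (δmin ^ 2 * (1 - q) ^ 2) := by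
    rw [hα]
    field_simp
    ring
  calc ∑ t ∈ Finset.range (T + 1), ∑ i, ∑ r, (x (t + 1) i r - zbar (t + 1) r) ^ 2
      ≤ ∑ t ∈ Finset.range (T + 1), (n:ℝ) ^ 2 * α ^ 2 * (q / (1 - q)) *
          ∑ s ∈ Finset.range (t + 1), q ^ (t + 1 - s) * (∑ r, ∑ j, (G s r j) ^ 2) :=
        Finset.sum_le_sum fun t _ => hper t
    _ = (n:ℝ) ^ 2 * α ^ 2 * (q / (1 - q)) * ∑ t ∈ Finset.range (T + 1),
          ∑ s ∈ Finset.range (t + 1), q ^ (t + 1 - s) * (∑ r, ∑ j, (G s r j) ^ 2) := by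
        rw [Finset.mul_sum]
    _ ≤ (n:ℝ) ^ 2 * α ^ 2 * (q / (1 - q)) *
          ((q / (1 - q)) * ∑ s ∈ Finset.range (T + 1), ∑ r, ∑ j, (G s r j) ^ 2) := by
        refine mul_le_mul_of_nonneg_left htot ?_
        positivity
    _ = 4 * γ ^ 2 * C ^ 2 * q ^ 2 / (δmin ^ 2 * (1 - q) ^ 2)
          * ∑ t ∈ Finset.range (T + 1), ∑ r, ∑ i, (G t r i) ^ 2 := by
        rw [← hconst]
        ring
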